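/- The function h(m) = √(1-m²)·log((1-m)/(1+m)) is strictly convex on (0,1). -/

import Mathlib

open Real Set Filter

private lemma aux_log_hasDerivAt (x : ℝ) (hx1 : -1 < x) (hx2 : x < 1) :
    HasDerivAt (fun m : ℝ => Real.log ((1 - m) / (1 + m))) (-2 / (1 - x ^ 2)) x := by
  have h1 : (0:ℝ) < 1 - x := by linarith
  have h2 : (0:ℝ) < 1 + x := by linarith
  have h3 : (0:ℝ) < 1 - x ^ 2 := by nlinarith
  have e : (fun m : ℝ => Real.log ((1 - m) / (1 + m))) =ᶠ[nhds x]
      fun m => Real.log (1 - m) - Real.log (1 + m) := by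
    filter_upwards [Ioo_mem_nhds hx1 hx2] with m hm
    exact Real.log_div (by linarith [hm.2]) (by linarith [hm.1])
  have ha : HasDerivAt (fun m : ℝ => Real.log (1 - m)) (-1 / (1 - x)) x := by
    have := (((hasDerivAt_id x).const_sub 1).log h1.ne')
    simpa using this
  have hb : HasDerivAt (fun m : ℝ => Real.log (1 + m)) (1 / (1 + x)) x := by
    have := (((hasDerivAt_id x).const_add 1).log h2.ne')
    simpa using this
  have := (ha.sub hb).congr_of_eventuallyEq e
  refine this.congr_deriv (Eq.symm ?_)
  field_simp
  ring

private lemma aux_f_hasDerivAt (x : ℝ) (hx1 : -1 < x) (hx2 : x < 1) :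
    HasDerivAt (fun m : ℝ => Real.sqrt (1 - m ^ 2) * Real.log ((1 - m) / (1 + m)))
      (-(x * Real.log ((1 - x) / (1 + x)) + 2) / Real.sqrt (1 - x ^ 2)) x := by
  have h3 : (0:ℝ) < 1 - x ^ 2 := by nlinarith
  have hs0 : 0 < Real.sqrt (1 - x ^ 2) := Real.sqrt_pos.2 h3
  have hs2 : Real.sqrt (1 - x ^ 2) ^ 2 = 1 - x ^ 2 := Real.sq_sqrt h3.le
  have hsq : HasDerivAt (fun m : ℝ => Real.sqrt (1 - m ^ 2)) (-x / Real.sqrt (1 - x ^ 2)) x := by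
    have h : HasDerivAt (fun m : ℝ => 1 - m ^ 2) (-(2 * x)) x := by
      simpa using ((hasDerivAt_pow 2 x).const_sub 1)
    have := h.sqrt h3.ne'
    convert this using 1
    field_simp
  have := hsq.mul (aux_log_hasDerivAt x hx1 hx2)
  refine this.congr_deriv (Eq.symm ?_)
  field_simp
  linear_combination 2 * hs2

private lemma aux_f'' (x : ℝ) (hx1 : -1 < x) (hx2 : x < 1) :
    HasDerivAt (fun m : ℝ => -(m * Real.log ((1 - m) / (1 + m)) + 2) / Real.sqrt (1 - m ^ 2))
      (-Real.log ((1 - x) / (1 + x)) / ((1 - x ^ 2) * Real.sqrt (1 - x ^ 2))) x := by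
  have h3 : (0:ℝ) < 1 - x ^ 2 := by nlinarith
  have hs0 : 0 < Real.sqrt (1 - x ^ 2) := Real.sqrt_pos.2 h3
  have hs2 : Real.sqrt (1 - x ^ 2) ^ 2 = 1 - x ^ 2 := Real.sq_sqrt h3.le
  have hsq : HasDerivAt (fun m : ℝ => Real.sqrt (1 - m ^ 2)) (-x / Real.sqrt (1 - x ^ 2)) x := by
    have h : HasDerivAt (fun m : ℝ => 1 - m ^ 2) (-(2 * x)) x := by
      simpa using ((hasDerivAt_pow 2 x).const_sub 1)
    have := h.sqrt h3.ne'
    convert this using 1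
    field_simp
  have hnum : HasDerivAt (fun m : ℝ => -(m * Real.log ((1 - m) / (1 + m)) + 2))
      (-(1 * Real.log ((1 - x) / (1 + x)) + x * (-2 / (1 - x ^ 2)))) x :=
    (((hasDerivAt_id x).mul (aux_log_hasDerivAt x hx1 hx2)).add_const 2).neg
  have := hnum.div hsq hs0.ne'
  refine this.congr_deriv (Eq.symm ?_)
  field_simp
  linear_combination (-(Real.log ((1 - x) / (1 + x)) * x ^ 2) - 2 * x) * hs2

/-- The function `h(m) = √(1-m²) · log((1-m)/(1+m))` is strictly convex on `(0,1)`. -/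
theorem strictConvexOn_sqrt_log :
    StrictConvexOn ℝ (Set.Ioo (0 : ℝ) 1)
      (fun m : ℝ => Real.sqrt (1 - m ^ 2) * Real.log ((1 - m) / (1 + m))) := by
  apply strictConvexOn_of_deriv2_pos (convex_Ioo 0 1)
  · intro x hx
    exact (aux_f_hasDerivAt x (by linarith [hx.1]) hx.2).continuousAt.continuousWithinAt
  · intro x hx
    rw [interior_Ioo] at hx
    obtain ⟨hx0, hx2⟩ := hx
    have hx1 : (-1:ℝ) < x := by linarith
    have h1 : (0:ℝ) < 1 - x := by linarith
    have h2 : (0:ℝ) < 1 + x := by linarith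
    have h3 : (0:ℝ) < 1 - x ^ 2 := by nlinarith
    have hs0 : 0 < Real.sqrt (1 - x ^ 2) := Real.sqrt_pos.2 h3
    have e : deriv (fun m : ℝ => Real.sqrt (1 - m ^ 2) * Real.log ((1 - m) / (1 + m)))
        =ᶠ[nhds x] fun m : ℝ => -(m * Real.log ((1 - m) / (1 + m)) + 2) / Real.sqrt (1 - m ^ 2) := by
      filter_upwards [Ioo_mem_nhds hx1 hx2] with m hm
      exact (aux_f_hasDerivAt m hm.1 hm.2).deriv
    have : deriv^[2] (fun m : ℝ => Real.sqrt (1 - m ^ 2) * Real.log ((1 - m) / (1 + m))) x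
        = -Real.log ((1 - x) / (1 + x)) / ((1 - x ^ 2) * Real.sqrt (1 - x ^ 2)) := by
      simp only [Function.iterate_succ, Function.iterate_zero, Function.comp_apply, id]
      rw [e.deriv_eq]
      exact (aux_f'' x hx1 hx2).deriv
    rw [this]
    have hL : Real.log ((1 - x) / (1 + x)) < 0 := by
      apply Real.log_neg (by positivity)
      rw [div_lt_one h2]; linarith
    exact div_pos (by linarith) (by positivity)
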